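/- Let G be a ternary semigroup, A a real normed ring whose norm is multiplicative (‖ab‖ = ‖a‖·‖b‖ for all a, b ∈ A), and ε ≥ 0. If f : G → A satisfies ‖f([xyz]) − f(x)·f(y)·f(z)‖ ≤ ε for all x, y, z ∈ G, then for all x, y, z, t, s ∈ G, ‖f([xyz]) − f(x)·f(y)·f(z)‖·‖f(t)‖·‖f(s)‖ ≤ 2ε + ε·‖f(x)‖·‖f(s)‖. -/
import Mathlib


theorem stmt_10 {G : Type*} (op : G → G → G → G)
    (assoc : ∀ x y z u v : G,
      op (op x y z) u v = op x (op y z u) v ∧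
      op x (op y z u) v = op x y (op z u v))
    {A : Type*} [NormedRing A]
    (hmul : ∀ a b : A, ‖a * b‖ = ‖a‖ * ‖b‖)
    (ε : ℝ) (hε : 0 ≤ ε) (f : G → A)
    (hf : ∀ x y z : G, ‖f (op x y z) - f x * f y * f z‖ ≤ ε) :
    ∀ x y z t s : G,
      ‖f (op x y z) - f x * f y * f z‖ * ‖f t‖ * ‖f s‖ ≤
        2 * ε + ε * ‖f x‖ * ‖f s‖ := by
  intro x y z t s
  have h1 : op (op x y z) t s = op x (op y z t) s := (assoc x y z t s).1
  have h3 : ‖f (op (op x y z) t s) - f (op x y z) * f t * f s‖ ≤ ε :=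
    hf (op x y z) t s
  have h4 : ‖f (op (op x y z) t s) - f x * f (op y z t) * f s‖ ≤ ε := by
    rw [h1]; exact hf x (op y z t) s
  have h5 : ‖f x * (f (op y z t) - f y * f z * f t) * f s‖
      ≤ ‖f x‖ * ε * ‖f s‖ := by
    rw [hmul, hmul]
    have h := hf y z t
    have hx : (0:ℝ) ≤ ‖f x‖ := norm_nonneg _
    have hs : (0:ℝ) ≤ ‖f s‖ := norm_nonneg _
    exact mul_le_mul_of_nonneg_right (mul_le_mul_of_nonneg_left h hx) hs
  have key : (f (op x y z) - f x * f y * f z) * f t * f s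
      = (f (op x y z) * f t * f s - f (op (op x y z) t s))
        + (f (op (op x y z) t s) - f x * f (op y z t) * f s)
        + (f x * (f (op y z t) - f y * f z * f t) * f s) := by noncomm_ring
  have step1 : ‖f (op x y z) - f x * f y * f z‖ * ‖f t‖ * ‖f s‖
      = ‖(f (op x y z) - f x * f y * f z) * f t * f s‖ := by rw [hmul, hmul]
  rw [step1, key]
  have tri : ‖(f (op x y z) * f t * f s - f (op (op x y z) t s))
        + (f (op (op x y z) t s) - f x * f (op y z t) * f s)
        + (f x * (f (op y z t) - f y * f z * f t) * f s)‖
      ≤ ‖f (op x y z) * f t * f s - f (op (op x y z) t s)‖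
        + ‖f (op (op x y z) t s) - f x * f (op y z t) * f s‖
        + ‖f x * (f (op y z t) - f y * f z * f t) * f s‖ :=
    (norm_add_le _ _).trans (by gcongr; exact norm_add_le _ _)
  refine tri.trans ?_
  rw [norm_sub_rev (f (op x y z) * f t * f s)]
  have : ε + ε + ‖f x‖ * ε * ‖f s‖ = 2 * ε + ε * ‖f x‖ * ‖f s‖ := by ring
  rw [← this]
  gcongr
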